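/- For each 1 ≤ i ≤ 6, no proper bistellar move can be applied to N_i; that is, N_i has no removable 1-face and no removable 2-face (equivalently: every edge e of N_i of degree 3 has link a 3-cycle on a set which is already a 2-face of N_i, and N_i is neighbourly so no bistellar 1-move is possible). -/
import Mathlib
set_option maxRecDepth 100000
set_option maxHeartbeats 1600000


/-! Basic framework for finite simplicial complexes, pseudomanifolds and
bistellar moves, following Datta–Nilakantan. A complex is recorded as the
finite set of its faces (nonempty finite subsets of the vertex type). -/

namespace NPM

variable {α β : Type*} [DecidableEq α] [DecidableEq β]

/-- A "complex" datum: a finite family of finite subsets of `α`. -/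
abbrev Complex (α : Type*) := Finset (Finset α)

/-- `K` is a simplicial complex: a nonempty collection of nonempty sets,
closed under passing to nonempty subsets. -/
def IsComplex (K : Complex α) : Prop :=
  K.Nonempty ∧ (∀ σ ∈ K, σ.Nonempty) ∧ ∀ σ ∈ K, ∀ τ ⊆ σ, τ.Nonempty → τ ∈ K

/-- The vertex set of `K`. -/
def verts (K : Complex α) : Finset α := K.sup id

/-- `K` is pure of dimension `d`: every face is contained in a face with
`d+1` vertices. -/
def IsPure (K : Complex α) (d : ℕ) : Prop :=
  ∀ σ ∈ K, ∃ τ ∈ K, σ ⊆ τ ∧ τ.card = d + 1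

/-- The facets ("`d`-faces") of a pure `d`-dimensional complex. -/
def facets (K : Complex α) (d : ℕ) : Complex α := K.filter (fun σ => σ.card = d + 1)

/-- The link of a face `σ` in `K`. -/
def link (K : Complex α) (σ : Finset α) : Complex α :=
  K.filter (fun τ => Disjoint τ σ ∧ σ ∪ τ ∈ K)

/-- The degree of a face: the number of vertices of its link. -/
def degree (K : Complex α) (σ : Finset α) : ℕ := (verts (link K σ)).card

/-- A weak `d`-pseudomanifold: a pure `d`-dimensional complex in which every
`(d-1)`-face (i.e. face with `d` vertices) lies in exactly two facets. -/
def WeakPM (K : Complex α) (d : ℕ) : Prop :=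
  IsComplex K ∧ IsPure K d ∧
    ∀ σ ∈ K, σ.card = d → (K.filter fun τ => σ ⊆ τ ∧ τ.card = d + 1).card = 2

/-- Strong connectedness: any two facets are joined by a chain of facets in
which consecutive facets meet in a `(d-1)`-face. -/
def SConn (K : Complex α) (d : ℕ) : Prop :=
  ∀ σ ∈ facets K d, ∀ τ ∈ facets K d,
    Relation.ReflTransGen
      (fun a b => a ∈ facets K d ∧ b ∈ facets K d ∧ (a ∩ b).card = d) σ τ

/-- A `d`-pseudomanifold: a strongly connected weak `d`-pseudomanifold. -/
def IsPM (K : Complex α) (d : ℕ) : Prop := WeakPM K d ∧ SConn K d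

/-- Connectedness of a complex: the graph of vertices and edges is connected. -/
def Conn (K : Complex α) : Prop :=
  (verts K).Nonempty ∧ ∀ u ∈ verts K, ∀ v ∈ verts K,
    Relation.ReflTransGen (fun a b => a ≠ b ∧ ({a, b} : Finset α) ∈ K) u v

/-- A normal `d`-pseudomanifold: a connected weak `d`-pseudomanifold in which
the link of every face of dimension `≤ d - 2` is connected. -/
def NormalPM (K : Complex α) (d : ℕ) : Prop :=
  WeakPM K d ∧ Conn K ∧ ∀ σ ∈ K, σ.card + 1 ≤ d → Conn (link K σ)

/-- `K` is neighbourly: every pair of vertices forms an edge. -/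
def Neighbourly (K : Complex α) : Prop :=
  ∀ u ∈ verts K, ∀ v ∈ verts K, u ≠ v → ({u, v} : Finset α) ∈ K

/-- Isomorphism of complexes: a map injective on the vertex set carrying the
faces of `K` exactly onto the faces of `L`. -/
def Iso (K : Complex α) (L : Complex β) : Prop :=
  ∃ f : α → β, Set.InjOn f ↑(verts K) ∧ L = K.image (fun σ => σ.image f)

/-- The complex generated by a family of facets: all nonempty subsets. -/
def genCx (F : Finset (Finset α)) : Complex α :=
  F.biUnion fun σ => σ.powerset.filter (fun τ => τ.Nonempty)

/-- The standard sphere on the vertex set `B`: all nonempty proper subsets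
of `B`. -/
def stdSphere (B : Finset α) : Complex α :=
  B.powerset.filter fun τ => τ.Nonempty ∧ τ ≠ B

/-- In a weak `d`-pseudomanifold, a removable `(d-i)`-face `A`: its link is a
standard sphere `S^{i-1}_{i+1}(B)` with `B` not a face.  (For `d = 3`,
`i = 1` gives removable 2-faces and `i = 2` gives removable 1-faces.) -/
def RemovableFace (d i : ℕ) (K : Complex α) (A : Finset α) : Prop :=
  A ∈ K ∧ A.card = d - i + 1 ∧
    ∃ B : Finset α, B.card = i + 1 ∧ B ∉ K ∧ link K A = stdSphere B

/-- The bistellar `i`-move (`0 < i ≤ d`) relation on weak `d`-pseudomanifolds: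
`L` is obtained from `K` by removing a removable `(d-i)`-face `A` with
`link K A = stdSphere B` and inserting the facets `(B ∪ A) \ {v}`, `v ∈ A`. -/
def BMove (d i : ℕ) (K L : Complex α) : Prop :=
  ∃ A B : Finset α, A ∈ K ∧ A.card = d - i + 1 ∧ B.card = i + 1 ∧ B ∉ K ∧
    link K A = stdSphere B ∧
    L = genCx ((facets K d).filter (fun σ => ¬ A ⊆ σ) ∪
          A.image fun v => (B ∪ A).erase v)

/-- The bistellar `0`-move: star a new vertex `w` in a facet `σ`. -/
def BMove0 (d : ℕ) (K L : Complex α) : Prop :=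
  ∃ σ w, σ ∈ K ∧ σ.card = d + 1 ∧ w ∉ verts K ∧
    L = genCx (((facets K d).erase σ) ∪ σ.image fun v => insert w (σ.erase v))

/-- A single bistellar move of any type `0 ≤ i ≤ d`. -/
def BStep (d : ℕ) (K L : Complex α) : Prop :=
  BMove0 d K L ∨ ∃ i, 0 < i ∧ i ≤ d ∧ BMove d i K L

/-- Bistellar equivalence: a finite sequence of bistellar moves. -/
def BEquiv (d : ℕ) : Complex α → Complex α → Prop :=
  Relation.ReflTransGen (BStep d)

/-- A proper bistellar move: a bistellar `i`-move with `0 < i < d`. -/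
def PMove (d : ℕ) (K L : Complex α) : Prop := ∃ i, 0 < i ∧ i < d ∧ BMove d i K L

/-- Proper bistellar equivalence. -/
def PEquiv (d : ℕ) : Complex α → Complex α → Prop :=
  Relation.ReflTransGen (PMove d)

/-- The result of the bistellar move on the face `A` of the weak
`d`-pseudomanifold `K` (deterministic form: `B` is the vertex set of
`link K A`). -/
def kappa (d : ℕ) (K : Complex α) (A : Finset α) : Complex α :=
  genCx ((facets K d).filter (fun σ => ¬ A ⊆ σ) ∪
    A.image fun v => (verts (link K A) ∪ A).erase v)

/-- A cycle: a (finite) 1-pseudomanifold. -/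
def Cycle (K : Complex α) : Prop := IsPM K 1

/-- A combinatorial 2-manifold: a weak 2-pseudomanifold all whose vertex
links are cycles. -/
def Comb2Mfd (K : Complex α) : Prop :=
  WeakPM K 2 ∧ ∀ v, ({v} : Finset α) ∈ K → Cycle (link K {v})

/-- The Euler characteristic `f₀ - f₁ + f₂` of a 2-dimensional complex. -/
def eulerChar (K : Complex α) : ℤ :=
  ((K.filter fun σ => σ.card = 1).card : ℤ) -
    ((K.filter fun σ => σ.card = 2).card : ℤ) +
    ((K.filter fun σ => σ.card = 3).card : ℤ)

/-- A combinatorial 2-sphere: a connected combinatorial 2-manifold with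
Euler characteristic 2. -/
def Comb2Sphere (K : Complex α) : Prop := Comb2Mfd K ∧ Conn K ∧ eulerChar K = 2

/-- A combinatorial 3-manifold: a 3-pseudomanifold all whose vertex links are
combinatorial 2-spheres. -/
def Comb3Mfd (K : Complex α) : Prop :=
  IsPM K 3 ∧ ∀ v, ({v} : Finset α) ∈ K → Comb2Sphere (link K {v})

end NPM

/-- The complex `N1` from the paper, generated by its facets. -/
def N1 : NPM.Complex ℕ :=
  NPM.genCx {{1,2,4,8}, {1,2,6,8}, {1,3,4,8}, {1,3,7,8}, {1,5,6,8}, {1,5,7,8}, {2,3,5,8}, {2,3,7,8}, {2,4,5,8}, {2,6,7,8}, {3,4,6,8}, {3,5,6,8}, {4,5,7,8}, {4,6,7,8}, {1,2,4,7}, {1,2,5,7}, {1,3,6,7}, {1,4,6,7}, {2,3,4,7}, {2,5,6,7}, {3,4,5,7}, {3,5,6,7}, {1,2,3,6}, {2,3,4,6}, {1,3,4,5}, {1,2,3,5}, {1,4,5,6}, {2,4,5,6}}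
/-- The complex `N2` from the paper, generated by its facets. -/
def N2 : NPM.Complex ℕ :=
  NPM.genCx {{1,2,4,8}, {2,4,5,8}, {2,3,5,8}, {3,5,6,8}, {3,4,6,8}, {4,6,7,8}, {4,5,7,8}, {1,5,7,8}, {1,5,6,8}, {1,2,6,8}, {2,6,7,8}, {2,3,7,8}, {1,3,7,8}, {1,3,4,8}, {1,2,4,7}, {2,4,5,7}, {2,3,5,7}, {3,5,6,7}, {3,4,6,7}, {1,5,6,7}, {1,2,6,7}, {1,3,4,7}}
/-- The complex `N3` from the paper, generated by its facets. -/
def N3 : NPM.Complex ℕ :=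
  NPM.genCx {{1,2,4,8}, {1,2,6,8}, {1,3,4,8}, {1,3,7,8}, {1,5,6,8}, {1,5,7,8}, {2,3,5,8}, {2,3,7,8}, {2,4,5,8}, {2,6,7,8}, {3,4,6,8}, {3,5,6,8}, {4,5,7,8}, {4,6,7,8}, {1,2,3,4}, {2,3,4,7}, {2,4,5,6}, {2,4,6,7}, {3,4,5,6}, {3,4,5,7}, {1,2,3,5}, {1,2,5,6}, {1,3,5,7}}
/-- The complex `N4` from the paper, generated by its facets. -/
def N4 : NPM.Complex ℕ :=
  NPM.genCx {{1,2,4,8}, {1,2,6,8}, {1,3,4,8}, {1,3,7,8}, {1,5,6,8}, {1,5,7,8}, {2,3,5,8}, {2,3,7,8}, {2,4,5,8}, {2,6,7,8}, {3,4,6,8}, {3,5,6,8}, {4,5,7,8}, {4,6,7,8}, {1,2,4,5}, {1,2,5,6}, {2,3,5,6}, {2,3,6,7}, {3,4,6,7}, {1,3,4,7}, {1,4,5,7}}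
/-- The complex `N5` from the paper, generated by its facets. -/
def N5 : NPM.Complex ℕ :=
  NPM.genCx {{1,2,5,8}, {1,2,6,8}, {1,3,5,8}, {1,3,7,8}, {1,4,6,8}, {1,4,7,8}, {2,3,6,8}, {2,3,7,8}, {2,4,5,8}, {2,4,7,8}, {3,4,5,8}, {3,4,6,8}, {1,2,5,7}, {1,2,6,7}, {1,3,6,7}, {1,4,5,7}, {2,3,5,7}, {2,4,6,7}, {3,4,5,7}, {3,4,6,7}, {2,3,5,6}, {2,4,5,6}, {1,3,5,6}, {1,4,5,6}}
/-- The complex `N6` from the paper, generated by its facets. -/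
def N6 : NPM.Complex ℕ :=
  NPM.genCx {{1,3,5,8}, {1,3,7,8}, {1,4,6,8}, {1,4,7,8}, {1,5,6,8}, {2,3,6,8}, {2,3,7,8}, {2,4,5,8}, {2,4,7,8}, {2,5,6,8}, {3,4,5,8}, {3,4,6,8}, {1,2,3,5}, {1,2,4,5}, {1,4,5,7}, {1,5,6,7}, {2,3,5,7}, {2,5,6,7}, {3,4,5,7}, {1,2,3,6}, {1,2,4,6}, {1,3,6,7}, {2,4,6,7}, {3,4,6,7}}


namespace NPM
variable {α : Type*} [DecidableEq α]

lemma mem_genCx {F : Finset (Finset α)} {τ : Finset α} :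
    τ ∈ genCx F ↔ τ.Nonempty ∧ ∃ σ ∈ F, τ ⊆ σ := by
  simp only [genCx, Finset.mem_biUnion, Finset.mem_filter, Finset.mem_powerset]
  tauto

lemma mem_verts {K : Complex α} {v : α} : v ∈ verts K ↔ ∃ τ ∈ K, v ∈ τ := by
  simp [verts, Finset.mem_sup]

/-- The neighbour set of `A` in the complex generated by `F`. -/
def nbrSet (V : Finset α) (F : Finset (Finset α)) (A : Finset α) : Finset α :=
  V.filter fun v => v ∉ A ∧ ∃ σ ∈ F, insert v A ⊆ σ

lemma verts_link_genCx {V : Finset α} {F : Finset (Finset α)} (hV : F.sup id = V)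
    (A : Finset α) : verts (link (genCx F) A) = nbrSet V F A := by
  ext v
  simp only [nbrSet, Finset.mem_filter, ← hV, Finset.mem_sup, id]
  constructor
  · rw [mem_verts]
    rintro ⟨τ, hτ, hv⟩
    simp only [link, Finset.mem_filter, mem_genCx] at hτ
    obtain ⟨⟨hne, σ, hσ, hsub⟩, hdisj, ⟨hne2, σ2, hσ2, hsub2⟩⟩ := hτ
    refine ⟨⟨σ, hσ, hsub hv⟩, Finset.disjoint_left.mp hdisj hv, σ2, hσ2, ?_⟩
    intro x hx
    rcases Finset.mem_insert.mp hx with rfl | hx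
    · exact hsub2 (Finset.mem_union_right _ hv)
    · exact hsub2 (Finset.mem_union_left _ hx)
  · rintro ⟨⟨σ, hσ, hv⟩, hvA, σ2, hσ2, hsub⟩
    rw [mem_verts]
    refine ⟨{v}, ?_, Finset.mem_singleton_self v⟩
    simp only [link, Finset.mem_filter, mem_genCx]
    refine ⟨⟨Finset.singleton_nonempty v, σ2, hσ2, ?_⟩,
      Finset.disjoint_singleton_left.mpr hvA, ⟨?_, σ2, hσ2, ?_⟩⟩
    · intro x hx; rw [Finset.mem_singleton] at hx; rw [hx]
      exact hsub (Finset.mem_insert_self v A)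
    · exact ⟨v, Finset.mem_union_right _ (Finset.mem_singleton_self v)⟩
    · intro x hx
      rcases Finset.mem_union.mp hx with hx | hx
      · exact hsub (Finset.mem_insert_of_mem hx)
      · rw [Finset.mem_singleton] at hx; rw [hx]
        exact hsub (Finset.mem_insert_self v A)

lemma verts_stdSphere {B : Finset α} (hB : 2 ≤ B.card) : verts (stdSphere B) = B := by
  apply Finset.Subset.antisymm
  · show (stdSphere B).sup id ≤ B
    apply Finset.sup_le
    intro σ hσ
    simp only [stdSphere, Finset.mem_filter, Finset.mem_powerset] at hσ
    exact hσ.1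
  · intro b hb
    have h1 : ({b} : Finset α) ∈ stdSphere B := by
      simp only [stdSphere, Finset.mem_filter, Finset.mem_powerset]
      refine ⟨Finset.singleton_subset_iff.mpr hb, Finset.singleton_nonempty b, ?_⟩
      intro h
      rw [← h] at hB
      simp at hB
    exact Finset.le_sup (f := id) h1 (Finset.mem_singleton_self b)

/-- Neighbourliness check at the level of facet lists. -/
def Q1 (V : Finset α) (F : Finset (Finset α)) : Prop :=
  ∀ u ∈ V, ∀ v ∈ V, u ≠ v → ∃ σ ∈ F, ({u, v} : Finset α) ⊆ σ

/-- Degree-3 edge check at the level of facet lists. -/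
def Q2 (V : Finset α) (F : Finset (Finset α)) : Prop :=
  ∀ u ∈ V, ∀ v ∈ V, u ≠ v → (nbrSet V F {u, v}).card = 3 →
    ∃ σ ∈ F, nbrSet V F {u, v} ⊆ σ

instance (V : Finset α) (F : Finset (Finset α)) : Decidable (Q1 V F) := by
  unfold Q1; infer_instance
instance (V : Finset α) (F : Finset (Finset α)) : Decidable (Q2 V F) := by
  unfold Q2; infer_instance

lemma no_rem1 {V : Finset α} {F : Finset (Finset α)} (hV : F.sup id = V)
    (hQ : Q1 V F) (A : Finset α) : ¬ RemovableFace 3 1 (genCx F) A := by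
  rintro ⟨hA, hcard, B, hBcard, hBX, hlink⟩
  have hBeq : B = nbrSet V F A := by
    rw [← verts_link_genCx hV, hlink, verts_stdSphere (by omega)]
  have hsubV : B ⊆ V := by rw [hBeq]; exact Finset.filter_subset _ _
  have h1B : 1 < B.card := by omega
  obtain ⟨u, hu, v, hv, huv⟩ := Finset.one_lt_card.mp h1B
  have hBuv : B = {u, v} := by
    refine (Finset.eq_of_subset_of_card_le ?_ ?_).symm
    · intro x hx
      rcases Finset.mem_insert.mp hx with rfl | hx
      · exact hu
      · rw [Finset.mem_singleton] at hx; subst hx; exact hv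
    · rw [Finset.card_pair huv]
      omega
  obtain ⟨σ, hσ, hsub⟩ := hQ u (hsubV hu) v (hsubV hv) huv
  exact hBX (mem_genCx.mpr ⟨⟨u, hu⟩, σ, hσ, hBuv ▸ hsub⟩)

lemma no_rem2 {V : Finset α} {F : Finset (Finset α)} (hV : F.sup id = V)
    (hQ : Q2 V F) (A : Finset α) : ¬ RemovableFace 3 2 (genCx F) A := by
  rintro ⟨hA, hcard, B, hBcard, hBX, hlink⟩
  have hBeq : B = nbrSet V F A := by
    rw [← verts_link_genCx hV, hlink, verts_stdSphere (by omega)]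
  obtain ⟨hne, σ0, hσ0, hsub0⟩ := mem_genCx.mp hA
  have hA2 : A.card = 2 := by omega
  have h1A : 1 < A.card := by omega
  obtain ⟨u, hu, v, hv, huv⟩ := Finset.one_lt_card.mp h1A
  have hAuv : A = {u, v} := by
    refine (Finset.eq_of_subset_of_card_le ?_ ?_).symm
    · intro x hx
      rcases Finset.mem_insert.mp hx with rfl | hx
      · exact hu
      · rw [Finset.mem_singleton] at hx; rw [hx]; exact hv
    · rw [Finset.card_pair huv]
      omega
  obtain ⟨σ, hσ, hsub⟩ := hQ u (hV ▸ Finset.le_sup (f := id) hσ0 (hsub0 hu))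
    v (hV ▸ Finset.le_sup (f := id) hσ0 (hsub0 hv)) huv
    (by rw [← hAuv, ← hBeq]; omega)
  rw [← hAuv] at hsub
  refine hBX (mem_genCx.mpr ⟨?_, σ, hσ, hBeq ▸ hsub⟩)
  exact Finset.card_pos.mp (by omega)

end NPM

/-- for `1 ≤ i ≤ 6`, no proper bistellar move applies to `N_i`:
it has no removable 1-face (`i = 2` below) and no removable 2-face
(`i = 1` below). -/
theorem statement8 :
    ∀ X ∈ ([N1, N2, N3, N4, N5, N6] : List (NPM.Complex ℕ)),
      ∀ i : ℕ, 0 < i → i < 3 → ∀ A : Finset ℕ, ¬ NPM.RemovableFace 3 i X A := by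
  intro X hX i hi1 hi3 A
  interval_cases i
  · fin_cases hX
    · exact NPM.no_rem1 (V := ({1,2,3,4,5,6,7,8} : Finset ℕ)) (by decide) (by decide) A
    · exact NPM.no_rem1 (V := ({1,2,3,4,5,6,7,8} : Finset ℕ)) (by decide) (by decide) A
    · exact NPM.no_rem1 (V := ({1,2,3,4,5,6,7,8} : Finset ℕ)) (by decide) (by decide) A
    · exact NPM.no_rem1 (V := ({1,2,3,4,5,6,7,8} : Finset ℕ)) (by decide) (by decide) A
    · exact NPM.no_rem1 (V := ({1,2,3,4,5,6,7,8} : Finset ℕ)) (by decide) (by decide) A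
    · exact NPM.no_rem1 (V := ({1,2,3,4,5,6,7,8} : Finset ℕ)) (by decide) (by decide) A
  · fin_cases hX
    · exact NPM.no_rem2 (V := ({1,2,3,4,5,6,7,8} : Finset ℕ)) (by decide) (by decide) A
    · exact NPM.no_rem2 (V := ({1,2,3,4,5,6,7,8} : Finset ℕ)) (by decide) (by decide) A
    · exact NPM.no_rem2 (V := ({1,2,3,4,5,6,7,8} : Finset ℕ)) (by decide) (by decide) A
    · exact NPM.no_rem2 (V := ({1,2,3,4,5,6,7,8} : Finset ℕ)) (by decide) (by decide) A
    · exact NPM.no_rem2 (V := ({1,2,3,4,5,6,7,8} : Finset ℕ)) (by decide) (by decide) A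
    · exact NPM.no_rem2 (V := ({1,2,3,4,5,6,7,8} : Finset ℕ)) (by decide) (by decide) A
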